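/- Fix real parameters α, ξ, ν and let u be an (α,ξ,ν)-eigenfunction. Then for every real polynomial p, with w := 2pu' − p'u, one has ∫₀^∞ ( −w''(t) + ((ξ−t)² + 1 − ν)w(t) ) u(t) dt = u(0)² ( −p''(0) + 2p'(0)(α−ξ) + 2p(0)( ξ² + 1 − ν − (α−ξ)² ) ). -/

import Mathlib

open MeasureTheory Polynomial Filter Set

/-- An `(α,ξ,ν)`-eigenfunction: a smooth function on `ℝ` which, together with all its
derivatives, decays faster than any polynomial on `[0,∞)`, solves
`−u'' + ((ξ−t)² + 1)u = νu` on `[0,∞)`, and satisfies the Robin condition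
`u'(0) = (α−ξ)u(0)`. -/
def IsEigen (α ξ ν : ℝ) (u : ℝ → ℝ) : Prop :=
  ContDiff ℝ (⊤ : ℕ∞) u ∧
  (∀ n k : ℕ, ∃ C : ℝ, ∀ t : ℝ, 0 ≤ t → |t| ^ k * |iteratedDeriv n u t| ≤ C) ∧
  (∀ t : ℝ, 0 ≤ t → -(deriv (deriv u) t) + ((ξ - t) ^ 2 + 1) * u t = ν * u t) ∧
  deriv u 0 = (α - ξ) * u 0

namespace PCIaux

/-- Continuous functions decaying faster than any polynomial on `[0,∞)`. -/
def Dec (g : ℝ → ℝ) : Prop :=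
  Continuous g ∧ ∀ q : Polynomial ℝ, ∃ C : ℝ, ∀ t : ℝ, 0 ≤ t → |q.eval t * g t| ≤ C

theorem Dec.bound {g : ℝ → ℝ} (h : Dec g) : ∃ C : ℝ, 0 ≤ C ∧ ∀ t, 0 ≤ t → |g t| ≤ C := by
  obtain ⟨C, hC⟩ := h.2 1
  refine ⟨C, le_trans (abs_nonneg _) (by simpa using hC 0 le_rfl), fun t ht => by
    simpa using hC t ht⟩

theorem Dec.congr {f g : ℝ → ℝ} (hg : Dec g) (h : ∀ t, f t = g t) : Dec f := by
  have : f = g := funext h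
  rw [this]; exact hg

theorem Dec.add {g h : ℝ → ℝ} (hg : Dec g) (hh : Dec h) : Dec (fun t => g t + h t) := by
  refine ⟨hg.1.add hh.1, fun q => ?_⟩
  obtain ⟨C, hC⟩ := hg.2 q; obtain ⟨D, hD⟩ := hh.2 q
  refine ⟨C + D, fun t ht => ?_⟩
  have : q.eval t * (g t + h t) = q.eval t * g t + q.eval t * h t := by ring
  rw [this]
  exact le_trans (abs_add_le _ _) (add_le_add (hC t ht) (hD t ht))

theorem Dec.neg {g : ℝ → ℝ} (hg : Dec g) : Dec (fun t => -g t) := by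
  refine ⟨hg.1.neg, fun q => ?_⟩
  obtain ⟨C, hC⟩ := hg.2 q
  exact ⟨C, fun t ht => by simpa [abs_mul] using hC t ht⟩

theorem Dec.sub {g h : ℝ → ℝ} (hg : Dec g) (hh : Dec h) : Dec (fun t => g t - h t) := by
  have := hg.add hh.neg
  exact this.congr (fun t => by ring)

theorem Dec.mul {g h : ℝ → ℝ} (hg : Dec g) (hh : Dec h) : Dec (fun t => g t * h t) := by
  refine ⟨hg.1.mul hh.1, fun q => ?_⟩
  obtain ⟨C, hC⟩ := hg.2 q
  obtain ⟨D, hD0, hD⟩ := hh.bound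
  refine ⟨C * D, fun t ht => ?_⟩
  have h1 : |q.eval t * g t * h t| = |q.eval t * g t| * |h t| := by rw [abs_mul]
  calc |q.eval t * (g t * h t)| = |q.eval t * g t| * |h t| := by rw [← h1]; ring_nf
    _ ≤ C * D :=
      mul_le_mul (hC t ht) (hD t ht) (abs_nonneg _) (le_trans (abs_nonneg _) (hC t ht))

theorem Dec.polyMul {g : ℝ → ℝ} (hg : Dec g) (r : Polynomial ℝ) :
    Dec (fun t => r.eval t * g t) := by
  refine ⟨r.continuous.mul hg.1, fun q => ?_⟩
  obtain ⟨C, hC⟩ := hg.2 (q * r)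
  refine ⟨C, fun t ht => ?_⟩
  have : q.eval t * (r.eval t * g t) = (q * r).eval t * g t := by
    rw [eval_mul]; ring
  rw [this]; exact hC t ht

theorem Dec.integrableOn {g : ℝ → ℝ} (h : Dec g) : IntegrableOn g (Ioi (0:ℝ)) := by
  obtain ⟨C, hC⟩ := h.2 (1 + Polynomial.X ^ 2)
  refine Integrable.mono' ((integrable_inv_one_add_sq.const_mul C).integrableOn)
    h.1.aestronglyMeasurable.restrict ?_
  rw [ae_restrict_iff' measurableSet_Ioi]
  filter_upwards with t ht
  have h1 : (0:ℝ) < 1 + t ^ 2 := by positivity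
  have h2 := hC t ht.le
  rw [show (1 + Polynomial.X ^ 2 : Polynomial ℝ).eval t = 1 + t ^ 2 by simp, abs_mul,
    abs_of_pos h1] at h2
  have h3 : |g t| ≤ C / (1 + t ^ 2) := by
    rw [le_div_iff₀ h1]; nlinarith [abs_nonneg (g t)]
  calc ‖g t‖ = |g t| := rfl
    _ ≤ C / (1 + t ^ 2) := h3
    _ = C * (1 + t ^ 2)⁻¹ := by rw [div_eq_mul_inv]

theorem Dec.tendsto {g : ℝ → ℝ} (h : Dec g) : Tendsto g atTop (nhds 0) := by
  obtain ⟨C, hC⟩ := h.2 (1 + Polynomial.X ^ 2)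
  apply squeeze_zero_norm' (a := fun t : ℝ => C / (1 + t ^ 2))
  · filter_upwards [eventually_ge_atTop (0:ℝ)] with t ht
    have h1 : (0:ℝ) < 1 + t ^ 2 := by positivity
    have h2 := hC t ht
    rw [show (1 + Polynomial.X ^ 2 : Polynomial ℝ).eval t = 1 + t ^ 2 by simp, abs_mul,
      abs_of_pos h1] at h2
    rw [le_div_iff₀ h1]
    calc ‖g t‖ * (1 + t ^ 2) = (1 + t ^ 2) * |g t| := by rw [Real.norm_eq_abs]; ring
      _ ≤ C := h2
  · apply Tendsto.div_atTop (tendsto_const_nhds)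
    exact tendsto_atTop_add_const_left _ 1 (tendsto_pow_atTop two_ne_zero)

end PCIaux

open PCIaux in
/-- For an `(α,ξ,ν)`-eigenfunction `u` and a real polynomial `p`, with `w = 2pu' − p'u`:
`∫₀^∞ (−w'' + ((ξ−t)²+1−ν)w) u dt
  = u(0)² (−p''(0) + 2p'(0)(α−ξ) + 2p(0)(ξ² + 1 − ν − (α−ξ)²))`. -/
theorem polynomial_commutator_integral
    (α ξ ν : ℝ) (u : ℝ → ℝ) (hu : IsEigen α ξ ν u) (p : Polynomial ℝ) :
    ∫ t in Set.Ioi (0 : ℝ),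
        (-(deriv (deriv (fun s : ℝ =>
              2 * p.eval s * deriv u s - (Polynomial.derivative p).eval s * u s)) t)
          + ((ξ - t) ^ 2 + 1 - ν) *
              (2 * p.eval t * deriv u t - (Polynomial.derivative p).eval t * u t)) * u t
      = u 0 ^ 2 *
          (-((Polynomial.derivative (Polynomial.derivative p)).eval 0)
            + 2 * (Polynomial.derivative p).eval 0 * (α - ξ)
            + 2 * p.eval 0 * (ξ ^ 2 + 1 - ν - (α - ξ) ^ 2)) := by
  obtain ⟨hsm, hdecay, hode, hrobin⟩ := hu
  -- smoothness of the derivatives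
  have hu0 : ContDiff ℝ (⊤ : ℕ∞) u := hsm
  have h0 := contDiff_infty_iff_deriv.mp hu0
  have h1 := contDiff_infty_iff_deriv.mp h0.2
  have h2 := contDiff_infty_iff_deriv.mp h1.2
  have hd0 : ∀ t : ℝ, HasDerivAt u (deriv u t) t := fun t => (h0.1 t).hasDerivAt
  have hd1 : ∀ t : ℝ, HasDerivAt (deriv u) (deriv (deriv u) t) t := fun t => (h1.1 t).hasDerivAt
  have hd2 : ∀ t : ℝ, HasDerivAt (deriv (deriv u)) (deriv (deriv (deriv u)) t) t :=
    fun t => (h2.1 t).hasDerivAt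
  -- decay of the derivatives
  have decU : ∀ n : ℕ, Dec (iteratedDeriv n u) := by
    intro n
    constructor
    · exact hu0.continuous_iteratedDeriv n (by exact_mod_cast (le_top : (n : ℕ∞) ≤ ⊤))
    · intro q
      induction q using Polynomial.induction_on' with
      | add r s hr hs =>
        obtain ⟨C, hC⟩ := hr; obtain ⟨D, hD⟩ := hs
        refine ⟨C + D, fun t ht => ?_⟩
        have : (r + s).eval t * iteratedDeriv n u t
            = r.eval t * iteratedDeriv n u t + s.eval t * iteratedDeriv n u t := by
          rw [eval_add]; ring
        rw [this]
        exact le_trans (abs_add_le _ _) (add_le_add (hC t ht) (hD t ht))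
      | monomial k a =>
        obtain ⟨C, hC⟩ := hdecay n k
        refine ⟨|a| * C, fun t ht => ?_⟩
        have : |(Polynomial.monomial k a).eval t * iteratedDeriv n u t|
            = |a| * (|t| ^ k * |iteratedDeriv n u t|) := by
          rw [eval_monomial, abs_mul, abs_mul, abs_pow]; ring
        rw [this]
        exact mul_le_mul_of_nonneg_left (hC t ht) (abs_nonneg a)
  have d0 : Dec u := by simpa [iteratedDeriv_zero] using decU 0
  have d1 : Dec (deriv u) := by
    have := decU 1; rwa [iteratedDeriv_one] at this
  have d2 : Dec (deriv (deriv u)) := by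
    have := decU 2; rwa [iteratedDeriv_succ, iteratedDeriv_one] at this
  have d3 : Dec (deriv (deriv (deriv u))) := by
    have := decU 3; rwa [iteratedDeriv_succ, iteratedDeriv_succ, iteratedDeriv_one] at this
  -- the commutator function and its derivatives
  set w : ℝ → ℝ := fun s : ℝ =>
      2 * p.eval s * deriv u s - (Polynomial.derivative p).eval s * u s with hwdef
  set w1 : ℝ → ℝ := fun t =>
      (2 * (Polynomial.derivative p).eval t * deriv u t
        + 2 * p.eval t * deriv (deriv u) t)
      - ((Polynomial.derivative (Polynomial.derivative p)).eval t * u t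
        + (Polynomial.derivative p).eval t * deriv u t) with hw1def
  set w2 : ℝ → ℝ := fun t =>
      ((2 * (Polynomial.derivative (Polynomial.derivative p)).eval t * deriv u t
          + 2 * (Polynomial.derivative p).eval t * deriv (deriv u) t)
        + (2 * (Polynomial.derivative p).eval t * deriv (deriv u) t
          + 2 * p.eval t * deriv (deriv (deriv u)) t))
      - (((Polynomial.derivative (Polynomial.derivative (Polynomial.derivative p))).eval t * u t
          + (Polynomial.derivative (Polynomial.derivative p)).eval t * deriv u t)
        + ((Polynomial.derivative (Polynomial.derivative p)).eval t * deriv u t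
          + (Polynomial.derivative p).eval t * deriv (deriv u) t)) with hw2def
  have hw1 : ∀ t : ℝ, HasDerivAt w (w1 t) t := by
    intro t
    have ha : HasDerivAt (fun s : ℝ => 2 * p.eval s * deriv u s)
        (2 * (Polynomial.derivative p).eval t * deriv u t
          + 2 * p.eval t * deriv (deriv u) t) t := by
      have := ((p.hasDerivAt t).const_mul 2).mul (hd1 t)
      convert this using 1
      try ring
      all_goals rfl
    have hb : HasDerivAt (fun s : ℝ => (Polynomial.derivative p).eval s * u s)
        ((Polynomial.derivative (Polynomial.derivative p)).eval t * u t
          + (Polynomial.derivative p).eval t * deriv u t) t :=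
      ((Polynomial.derivative p).hasDerivAt t).mul (hd0 t)
    exact ha.sub hb
  have hw2 : ∀ t : ℝ, HasDerivAt w1 (w2 t) t := by
    intro t
    have ha : HasDerivAt (fun s : ℝ => 2 * (Polynomial.derivative p).eval s * deriv u s
        + 2 * p.eval s * deriv (deriv u) s)
        ((2 * (Polynomial.derivative (Polynomial.derivative p)).eval t * deriv u t
          + 2 * (Polynomial.derivative p).eval t * deriv (deriv u) t)
        + (2 * (Polynomial.derivative p).eval t * deriv (deriv u) t
          + 2 * p.eval t * deriv (deriv (deriv u)) t)) t := by
      have hx := (((Polynomial.derivative p).hasDerivAt t).const_mul 2).mul (hd1 t)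
      have hy := ((p.hasDerivAt t).const_mul 2).mul (hd2 t)
      have := hx.add hy
      convert this using 1
      try ring
      all_goals rfl
    have hb : HasDerivAt (fun s : ℝ =>
        (Polynomial.derivative (Polynomial.derivative p)).eval s * u s
          + (Polynomial.derivative p).eval s * deriv u s)
        (((Polynomial.derivative (Polynomial.derivative (Polynomial.derivative p))).eval t * u t
          + (Polynomial.derivative (Polynomial.derivative p)).eval t * deriv u t)
        + ((Polynomial.derivative (Polynomial.derivative p)).eval t * deriv u t
          + (Polynomial.derivative p).eval t * deriv (deriv u) t)) t := by
      have hx := ((Polynomial.derivative (Polynomial.derivative p)).hasDerivAt t).mul (hd0 t)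
      have hy := ((Polynomial.derivative p).hasDerivAt t).mul (hd1 t)
      exact hx.add hy
    exact ha.sub hb
  have hderiv_w : deriv w = w1 := funext fun t => (hw1 t).deriv
  have hderiv_w2 : deriv (deriv w) = w2 := by
    rw [hderiv_w]; exact funext fun t => (hw2 t).deriv
  -- the antiderivative F and its derivative G
  set F : ℝ → ℝ := fun t => deriv u t * w t - w1 t * u t with hFdef
  set G : ℝ → ℝ := fun t => deriv (deriv u) t * w t - w2 t * u t with hGdef
  have hF : ∀ t : ℝ, HasDerivAt F (G t) t := by
    intro t
    have := ((hd1 t).mul (hw1 t)).sub ((hw2 t).mul (hd0 t))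
    convert this using 1
    show deriv (deriv u) t * w t - w2 t * u t = _
    ring
    all_goals rfl
  -- decay properties
  have dw : Dec w := by
    have := (d1.polyMul (Polynomial.C 2 * p)).sub (d0.polyMul (Polynomial.derivative p))
    exact this.congr (fun t => by simp [hwdef, eval_mul, eval_C]; try ring)
  have dw1 : Dec w1 := by
    have := ((d1.polyMul (Polynomial.C 2 * Polynomial.derivative p)).add
        (d2.polyMul (Polynomial.C 2 * p))).sub
      ((d0.polyMul (Polynomial.derivative (Polynomial.derivative p))).add
        (d1.polyMul (Polynomial.derivative p)))
    exact this.congr (fun t => by simp [hw1def, eval_mul, eval_C]; try ring)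
  have dw2 : Dec w2 := by
    have := (((d1.polyMul (Polynomial.C 2 * Polynomial.derivative (Polynomial.derivative p))).add
        (d2.polyMul (Polynomial.C 2 * Polynomial.derivative p))).add
        ((d2.polyMul (Polynomial.C 2 * Polynomial.derivative p)).add
          (d3.polyMul (Polynomial.C 2 * p)))).sub
      (((d0.polyMul
            (Polynomial.derivative (Polynomial.derivative (Polynomial.derivative p)))).add
          (d1.polyMul (Polynomial.derivative (Polynomial.derivative p)))).add
        ((d1.polyMul (Polynomial.derivative (Polynomial.derivative p))).add
          (d2.polyMul (Polynomial.derivative p))))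
    exact this.congr (fun t => by simp [hw2def, eval_mul, eval_C]; try ring)
  have dF : Dec F := (d1.mul dw).sub (dw1.mul d0)
  have dG : Dec G := (d2.mul dw).sub (dw2.mul d0)
  -- rewrite the integrand as G on (0,∞)
  have key : Set.EqOn (fun t : ℝ =>
      (-(deriv (deriv w) t) + ((ξ - t) ^ 2 + 1 - ν) * w t) * u t) G (Set.Ioi 0) := by
    intro t ht
    have hodet := hode t (le_of_lt ht)
    have hu2t : ((ξ - t) ^ 2 + 1 - ν) * u t = deriv (deriv u) t := by linarith
    simp only [hderiv_w2, hGdef]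
    linear_combination w t * hu2t
  rw [setIntegral_congr_fun measurableSet_Ioi key]
  -- improper FTC
  have hint := integral_Ioi_of_hasDerivAt_of_tendsto (a := (0:ℝ)) (m := (0:ℝ))
    (hF 0).continuousAt.continuousWithinAt (fun x _ => hF x) dG.integrableOn dF.tendsto
  rw [hint]
  -- boundary computation
  have h20 : deriv (deriv u) 0 = (ξ ^ 2 + 1 - ν) * u 0 := by
    have := hode 0 le_rfl
    linear_combination (-1 : ℝ) * this
  simp only [hFdef, hwdef, hw1def]
  rw [hrobin, h20]
  ring
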